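/- Let S be an affine semigroup whose cone has extremal rays τ₁,…,τ_t, and let P be an ideal of S. Then P ∪ {0} is an affine (finitely generated) semigroup with cone equal to the cone of S if and only if there exists Y ⊆ P \ {0} with Y ∩ τ_i ≠ ∅ for all i ∈ {1,…,t}. -/

import Mathlib

open Pointwise

/-- `S` is an affine semigroup: a finitely generated additive submonoid of `ℕ^p`
(containing `0`). -/
def IsAffine {p : ℕ} (S : Set (Fin p → ℕ)) : Prop :=
  ∃ F : Finset (Fin p → ℕ),
    S = (AddSubmonoid.closure (F : Set (Fin p → ℕ)) : Set (Fin p → ℕ))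

/-- The set of integer points of the rational cone generated by `S`:
`x` is a non-negative rational combination of elements of `S` iff some positive
multiple of `x` lies in the additive monoid generated by `S`. -/
def coneOf {p : ℕ} (S : Set (Fin p → ℕ)) : Set (Fin p → ℕ) :=
  {x | ∃ n : ℕ, 0 < n ∧ n • x ∈ AddSubmonoid.closure S}

/-- A `𝒞`-semigroup: an affine semigroup with finite complement in its cone. -/
def CSemigroup {p : ℕ} (S : Set (Fin p → ℕ)) : Prop :=
  IsAffine S ∧ (coneOf S \ S).Finite

/-- `P` is an ideal of `S`: `P ⊆ S` and `P + S ⊆ P`. -/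
def IsIdealOf {p : ℕ} (S P : Set (Fin p → ℕ)) : Prop :=
  P ⊆ S ∧ P + S ⊆ P

/-- `x ≤_S y` iff `y - x ∈ S`. -/
def leS {p : ℕ} (S : Set (Fin p → ℕ)) (x y : Fin p → ℕ) : Prop :=
  ∃ s ∈ S, x + s = y

/-- A non-empty subset `X ⊆ S` is `S`-incomparable if `x - x' ∉ S` for all
distinct `x, x' ∈ X`. -/
def SIncomparable {p : ℕ} (S X : Set (Fin p → ℕ)) : Prop :=
  X.Nonempty ∧ X ⊆ S ∧ ∀ x ∈ X, ∀ x' ∈ X, x ≠ x' → ¬ leS S x' x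

/-- The minimal generating set of `T`: non-zero elements of `T` that are not a
sum of two non-zero elements of `T`. -/
def msg {p : ℕ} (T : Set (Fin p → ℕ)) : Set (Fin p → ℕ) :=
  {x ∈ T | x ≠ 0 ∧ ¬ ∃ a ∈ T, ∃ b ∈ T, a ≠ 0 ∧ b ≠ 0 ∧ x = a + b}

/-- The Apery set `Ap(S, m) = {s ∈ S : s - m ∉ S}`. -/
def Ap {p : ℕ} (S : Set (Fin p → ℕ)) (m : Fin p → ℕ) : Set (Fin p → ℕ) :=
  {s ∈ S | ¬ ∃ u ∈ S, m + u = s}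

/-- `τ` is an extremal ray of the cone `C`: the set of points of `C` lying on the
ray spanned by some non-zero `v ∈ C`, such that whenever a sum of two elements of
`C` lies in `τ`, both summands lie in `τ`. -/
def IsExtremalRay {p : ℕ} (C τ : Set (Fin p → ℕ)) : Prop :=
  (∃ v : Fin p → ℕ, v ≠ 0 ∧ v ∈ C ∧
    τ = {x ∈ C | ∃ a b : ℕ, 0 < b ∧ b • x = a • v}) ∧
  ∀ x ∈ C, ∀ y ∈ C, x + y ∈ τ → x ∈ τ ∧ y ∈ τ

/-- `τ 1, …, τ t` are (exactly) the extremal rays of the cone `C`. -/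
def RaysOf {p t : ℕ} (C : Set (Fin p → ℕ)) (τ : Fin t → Set (Fin p → ℕ)) : Prop :=
  (∀ i, IsExtremalRay C (τ i)) ∧ Function.Injective τ ∧
    ∀ ρ, IsExtremalRay C ρ → ∃ i, ρ = τ i

/-- `m` is the `i`-multiplicity of `T` along the ray `τ`: the minimum non-zero
element of `τ ∩ T` for the componentwise order. -/
def MultOn {p : ℕ} (τ T : Set (Fin p → ℕ)) (m : Fin p → ℕ) : Prop :=
  m ∈ τ ∧ m ∈ T ∧ m ≠ 0 ∧ ∀ x ∈ τ ∩ T, x ≠ 0 → m ≤ x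

/-- `T` is an `I(S)`-semigroup: an affine semigroup such that `T \ {0}` is an
ideal of `S`. -/
def ISemigroupOf {p : ℕ} (S T : Set (Fin p → ℕ)) : Prop :=
  IsAffine T ∧ 0 ∈ T ∧ IsIdealOf S (T \ {0})

/-- `le` is a monomial order on `ℕ^p`: a total order compatible with addition in
which `0` is the least element. -/
def IsMonomialOrder {p : ℕ} (le : (Fin p → ℕ) → (Fin p → ℕ) → Prop) : Prop :=
  (∀ x, le x x) ∧ (∀ x y z, le x y → le y z → le x z) ∧
  (∀ x y, le x y → le y x → x = y) ∧ (∀ x y, le x y ∨ le y x) ∧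
  (∀ x y z, le x y → le (x + z) (y + z)) ∧ (∀ x, le 0 x)

/-- The pseudo-Frobenius elements of `T`. -/
def PF {p : ℕ} (T : Set (Fin p → ℕ)) : Set (Fin p → ℕ) :=
  {x ∈ coneOf T \ T | ∀ y ∈ T, y ≠ 0 → x + y ∈ T}

namespace S7
open AddSubmonoid
variable {p : ℕ}

lemma pi_add_eq_zero {a b : Fin p → ℕ} (h : a + b = 0) : a = 0 ∧ b = 0 := by
  constructor <;> funext i <;> have := congrFun h i <;>
    simp only [Pi.add_apply, Pi.zero_apply] at this ⊢ <;> omega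

lemma pi_nsmul_eq_zero {n : ℕ} {a : Fin p → ℕ} (hn : 0 < n) (h : n • a = 0) : a = 0 := by
  funext i
  have := congrFun h i
  simp only [Pi.smul_apply, smul_eq_mul, Pi.zero_apply] at this ⊢
  rcases Nat.mul_eq_zero.mp this with h | h
  · omega
  · exact h

lemma coneOf_mono {S T : Set (Fin p → ℕ)} (h : S ⊆ T) : coneOf S ⊆ coneOf T :=
  fun _ ⟨n, hn, hx⟩ => ⟨n, hn, AddSubmonoid.closure_mono h hx⟩

lemma zero_mem_coneOf (S : Set (Fin p → ℕ)) : 0 ∈ coneOf S :=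
  ⟨1, one_pos, by simpa using zero_mem _⟩

lemma subset_coneOf (S : Set (Fin p → ℕ)) : S ⊆ coneOf S :=
  fun x hx => ⟨1, one_pos, by simpa using AddSubmonoid.subset_closure hx⟩

lemma add_mem_coneOf {S : Set (Fin p → ℕ)} {x y : Fin p → ℕ}
    (hx : x ∈ coneOf S) (hy : y ∈ coneOf S) : x + y ∈ coneOf S := by
  obtain ⟨n, hn, hx⟩ := hx
  obtain ⟨m, hm, hy⟩ := hy
  refine ⟨n * m, Nat.mul_pos hn hm, ?_⟩
  rw [smul_add]
  have h1 : (n * m) • x = m • (n • x) := by rw [smul_smul, mul_comm]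
  have h2 : (n * m) • y = n • (m • y) := by rw [smul_smul]
  rw [h1, h2]
  exact add_mem (nsmul_mem hx m) (nsmul_mem hy n)

lemma nsmul_mem_coneOf {S : Set (Fin p → ℕ)} {x : Fin p → ℕ} (k : ℕ)
    (hx : x ∈ coneOf S) : k • x ∈ coneOf S := by
  obtain ⟨n, hn, hx⟩ := hx
  exact ⟨n, hn, by rw [smul_comm]; exact nsmul_mem hx k⟩

lemma coneOf_coe_closure (A : Set (Fin p → ℕ)) :
    coneOf (AddSubmonoid.closure A : Set (Fin p → ℕ)) = coneOf A := by
  unfold coneOf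
  rw [AddSubmonoid.closure_eq]

lemma exists_coeffs {G : Finset (Fin p → ℕ)} {x : Fin p → ℕ}
    (hx : x ∈ AddSubmonoid.closure (G : Set (Fin p → ℕ))) :
    ∃ c : (Fin p → ℕ) → ℕ, x = ∑ g ∈ G, c g • g := by
  classical
  induction hx using AddSubmonoid.closure_induction with
  | mem g hg =>
    refine ⟨fun h => if h = g then 1 else 0, ?_⟩
    have : (∑ h ∈ G, (if h = g then 1 else 0) • h) = ∑ h ∈ G, (if h = g then h else 0) := by
      refine Finset.sum_congr rfl fun h _ => ?_
      split <;> simp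
    rw [this, Finset.sum_ite_eq' G g (fun h => h), if_pos (Finset.mem_coe.mp hg)]
  | zero => exact ⟨0, by simp⟩
  | add a b _ _ iha ihb =>
    obtain ⟨c1, h1⟩ := iha
    obtain ⟨c2, h2⟩ := ihb
    exact ⟨c1 + c2, by simp [h1, h2, add_smul, Finset.sum_add_distrib]⟩

lemma coeffs_mem {G : Finset (Fin p → ℕ)} (c : (Fin p → ℕ) → ℕ) :
    ∑ g ∈ G, c g • g ∈ AddSubmonoid.closure (G : Set (Fin p → ℕ)) :=
  sum_mem fun g hg => nsmul_mem (subset_closure hg) _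


def rayset (C : Set (Fin p → ℕ)) (v : Fin p → ℕ) : Set (Fin p → ℕ) :=
  {x ∈ C | ∃ a b : ℕ, 0 < b ∧ b • x = a • v}


lemma nsmul_mem_closure_of {A : Set (Fin p → ℕ)} {g : Fin p → ℕ} {N : ℕ}
    (hg : N • g ∈ AddSubmonoid.closure A) :
    ∀ x ∈ AddSubmonoid.closure (insert g A), N • x ∈ AddSubmonoid.closure A := by
  intro x hx
  induction hx using AddSubmonoid.closure_induction with
  | mem y hy =>
    rcases hy with rfl | hy
    · exact hg
    · exact nsmul_mem (AddSubmonoid.subset_closure hy) N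
  | zero => simpa using zero_mem _
  | add a b _ _ iha ihb => rw [smul_add]; exact add_mem iha ihb

lemma minkowski_aux : ∀ (n : ℕ) (G : Finset (Fin p → ℕ)), G.card = n →
    ∀ x ∈ coneOf (G : Set (Fin p → ℕ)), x ≠ 0 →
    ∃ g ∈ G, g ≠ 0 ∧ IsExtremalRay (coneOf (G : Set (Fin p → ℕ)))
        (rayset (coneOf (G : Set (Fin p → ℕ))) g) ∧
      ∃ M k z, 0 < M ∧ 0 < k ∧ z ∈ coneOf (G : Set (Fin p → ℕ)) ∧ M • x = k • g + z := by
  intro n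
  induction n using Nat.strong_induction_on with
  | _ n ih =>
    intro G hcard x hx hx0
    classical
    by_cases hred : ∃ g ∈ G, ∃ N, 0 < N ∧ N • g ∈ AddSubmonoid.closure ((G.erase g : Finset _) : Set (Fin p → ℕ))
    · obtain ⟨g, hg, N, hN, hmem⟩ := hred
      have hins : (G : Set (Fin p → ℕ)) = insert g ((G.erase g : Finset _) : Set (Fin p → ℕ)) := by
        rw [Finset.coe_erase, Set.insert_diff_singleton, Set.insert_eq_self.mpr (Finset.mem_coe.mpr hg)]
      have hcone_eq : coneOf ((G.erase g : Finset _) : Set (Fin p → ℕ)) = coneOf (G : Set (Fin p → ℕ)) := by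
        apply Set.Subset.antisymm
        · exact coneOf_mono (by rw [hins]; exact Set.subset_insert _ _)
        · rintro y ⟨m, hm, hy⟩
          refine ⟨N * m, Nat.mul_pos hN hm, ?_⟩
          rw [mul_smul]
          exact nsmul_mem_closure_of hmem _ (hins ▸ hy)
      obtain ⟨g', hg', hg'0, hray, hdom⟩ :=
        ih (G.erase g).card (hcard ▸ Finset.card_erase_lt_of_mem hg) (G.erase g) rfl x
          (hcone_eq ▸ hx) hx0
      rw [hcone_eq] at hray hdom
      exact ⟨g', Finset.mem_of_mem_erase hg', hg'0, hray, hdom⟩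
    · push_neg at hred
      have hGne0 : ∀ g ∈ G, g ≠ (0 : Fin p → ℕ) := by
        rintro g hg rfl
        exact hred 0 hg 1 one_pos (by simpa using zero_mem _)
      obtain ⟨N, hNpos, hNx⟩ := hx
      obtain ⟨c, hcx⟩ := exists_coeffs hNx
      have hNx0 : N • x ≠ 0 := fun h => hx0 (pi_nsmul_eq_zero hNpos h)
      obtain ⟨g, hg, hcg⟩ : ∃ g ∈ G, c g • g ≠ 0 :=
        Finset.exists_ne_zero_of_sum_ne_zero (hcx ▸ hNx0)
      have hg0 : g ≠ 0 := hGne0 g hg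
      have hcgpos : 0 < c g := by
        rcases Nat.eq_zero_or_pos (c g) with h | h
        · exact absurd (by rw [h, zero_smul]) hcg
        · exact h
      set C := coneOf (G : Set (Fin p → ℕ)) with hC
      have hmemC : ∀ y ∈ G, y ∈ C := fun y hy => subset_coneOf _ (Finset.mem_coe.mpr hy)
      -- extremality
      have hext : IsExtremalRay C (rayset C g) := by
        constructor
        · exact ⟨g, hg0, hmemC g hg, rfl⟩
        · intro u hu w hw huw
          obtain ⟨_, a, b, hb, hab⟩ := huw
          rcases Nat.eq_zero_or_pos a with rfl | ha
          · have h0 : u + w = 0 := pi_nsmul_eq_zero hb (by rw [hab, zero_smul])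
            obtain ⟨hu0, hw0⟩ := pi_add_eq_zero h0
            constructor
            · exact ⟨hu, 0, 1, one_pos, by rw [hu0]; simp⟩
            · exact ⟨hw, 0, 1, one_pos, by rw [hw0]; simp⟩
          · obtain ⟨Nu, hNu, hu'⟩ := hu
            obtain ⟨Nw, hNw, hw'⟩ := hw
            obtain ⟨lam, hlam⟩ := exists_coeffs hu'
            obtain ⟨mu, hmu⟩ := exists_coeffs hw'
            set d : (Fin p → ℕ) → ℕ := fun h => Nw * b * lam h + Nu * b * mu h with hd
            set A := a * (Nu * Nw) with hA
            have key : ∑ h ∈ G, d h • h = A • g := by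
              have e1 : ∑ h ∈ G, d h • h
                  = (Nw * b) • (∑ h ∈ G, lam h • h) + (Nu * b) • (∑ h ∈ G, mu h • h) := by
                rw [Finset.smul_sum, Finset.smul_sum, ← Finset.sum_add_distrib]
                refine Finset.sum_congr rfl fun h _ => ?_
                show (Nw * b * lam h + Nu * b * mu h) • h = _
                rw [add_smul, smul_smul, smul_smul]
              have e2 : (Nw * b) • (Nu • u) + (Nu * b) • (Nw • w)
                  = (Nu * Nw) • (b • (u + w)) := by
                simp only [smul_smul, smul_add]
                congr 1
                · congr 1; ring
                · congr 1; ring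
              rw [e1, ← hlam, ← hmu, e2, hab, smul_smul, hA]
              congr 1
              ring
            have hApos : 0 < A := by positivity
            have hsplit : d g • g + ∑ h ∈ G.erase g, d h • h = A • g := by
              rw [Finset.add_sum_erase G (fun h => d h • h) hg]; exact key
            rcases le_or_gt A (d g) with hle | hlt
            · have : A • g + ((d g - A) • g + ∑ h ∈ G.erase g, d h • h) = A • g + 0 := by
                rw [add_zero, ← add_assoc, ← add_smul, Nat.add_sub_cancel' hle]
                exact hsplit
              have hz : (d g - A) • g + ∑ h ∈ G.erase g, d h • h = 0 := add_left_cancel this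
              have hsum0 : ∑ h ∈ G.erase g, d h • h = 0 := (pi_add_eq_zero hz).2
              have hdh : ∀ h ∈ G.erase g, d h = 0 := by
                intro h hh
                have := (Finset.sum_eq_zero_iff.mp hsum0) h hh
                by_contra hne
                exact hGne0 h (Finset.mem_of_mem_erase hh) (pi_nsmul_eq_zero (Nat.pos_of_ne_zero hne) this)
              have hlam0 : ∀ h ∈ G.erase g, lam h = 0 ∧ mu h = 0 := by
                intro h hh
                have h0 : Nw * b * lam h + Nu * b * mu h = 0 := hdh h hh
                rcases Nat.add_eq_zero.mp h0 with ⟨h1, h2⟩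
                refine ⟨?_, ?_⟩
                · rcases Nat.mul_eq_zero.mp h1 with h' | h'
                  · exact absurd h' (Nat.mul_ne_zero hNw.ne' hb.ne')
                  · exact h'
                · rcases Nat.mul_eq_zero.mp h2 with h' | h'
                  · exact absurd h' (Nat.mul_ne_zero hNu.ne' hb.ne')
                  · exact h'
              have hu_ray : Nu • u = lam g • g := by
                rw [hlam, ← Finset.add_sum_erase G (fun h => lam h • h) hg]
                rw [Finset.sum_eq_zero fun h hh => by rw [(hlam0 h hh).1, zero_smul], add_zero]
              have hw_ray : Nw • w = mu g • g := by
                rw [hmu, ← Finset.add_sum_erase G (fun h => mu h • h) hg]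
                rw [Finset.sum_eq_zero fun h hh => by rw [(hlam0 h hh).2, zero_smul], add_zero]
              exact ⟨⟨⟨Nu, hNu, hu'⟩, lam g, Nu, hNu, hu_ray⟩,
                ⟨⟨Nw, hNw, hw'⟩, mu g, Nw, hNw, hw_ray⟩⟩
            · exfalso
              have : d g • g + ∑ h ∈ G.erase g, d h • h = d g • g + (A - d g) • g := by
                rw [hsplit, ← add_smul, Nat.add_sub_cancel' hlt.le]
              have hz : ∑ h ∈ G.erase g, d h • h = (A - d g) • g := add_left_cancel this
              exact hred g hg (A - d g) (by omega) (hz ▸ coeffs_mem (G := G.erase g) d)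
      have hzmem : (∑ h ∈ G.erase g, c h • h) ∈ coneOf (G : Set (Fin p → ℕ)) :=
        ⟨1, one_pos, by
          simpa using sum_mem fun h hh =>
            nsmul_mem (AddSubmonoid.subset_closure
              (Finset.mem_coe.mpr (Finset.mem_of_mem_erase hh))) (c h)⟩
      refine ⟨g, hg, hg0, hext, N, c g, ∑ h ∈ G.erase g, c h • h, hNpos, hcgpos, hzmem, ?_⟩
      rw [hcx, Finset.add_sum_erase G (fun h => c h • h) hg]


lemma exists_minimal_le {ι : Type*} [Fintype ι] (U : Set (ι → ℕ)) :
    ∀ u ∈ U, ∃ b ∈ U, b ≤ u ∧ ∀ v ∈ U, v ≤ b → v = b := by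
  suffices H : ∀ n (u : ι → ℕ), u ∈ U → (∑ i, u i) = n →
      ∃ b ∈ U, b ≤ u ∧ ∀ v ∈ U, v ≤ b → v = b by
    intro u hu; exact H _ u hu rfl
  intro n
  induction n using Nat.strong_induction_on with
  | _ n ihn =>
    intro u hu hsum
    by_cases h : ∀ v ∈ U, v ≤ u → v = u
    · exact ⟨u, hu, le_refl u, h⟩
    · push_neg at h
      obtain ⟨v, hv, hvu, hne⟩ := h
      have hlt : (∑ i, v i) < n := by
        rw [← hsum]
        refine Finset.sum_lt_sum (fun i _ => hvu i) ?_
        obtain ⟨i, hi⟩ := Function.ne_iff.mp hne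
        exact ⟨i, Finset.mem_univ i, lt_of_le_of_ne (hvu i) hi⟩
      obtain ⟨b, hb, hbv, hmin⟩ := ihn _ hlt v hv rfl
      exact ⟨b, hb, le_trans hbv hvu, hmin⟩

lemma finite_minimals {ι : Type*} [Fintype ι] (U : Set (ι → ℕ)) :
    {b ∈ U | ∀ v ∈ U, v ≤ b → v = b}.Finite := by
  by_contra h
  have hinf : {b ∈ U | ∀ v ∈ U, v ≤ b → v = b}.Infinite := h
  obtain f := hinf.natEmbedding
  have hpwo : {b ∈ U | ∀ v ∈ U, v ≤ b → v = b}.IsPWO :=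
    Set.isPWO_of_wellQuasiOrderedLE _
  obtain ⟨m, n, hmn, hle⟩ := hpwo.exists_lt (f := fun k => (f k : ι → ℕ)) (fun k => (f k).2)
  have heq : ((f m : ι → ℕ)) = (f n : ι → ℕ) := (f n).2.2 _ (f m).2.1 hle
  exact absurd (f.injective (Subtype.ext heq)) (Nat.ne_of_lt hmn)


lemma nsmul_split_one {n : ℕ} (hn : 1 ≤ n) (v : Fin p → ℕ) :
    n • v = v + (n - 1) • v := by
  conv_lhs => rw [show n = 1 + (n - 1) by omega]
  rw [add_smul, one_smul]

lemma exists_gen_on_ray {S τ : Set (Fin p → ℕ)} {F : Finset (Fin p → ℕ)}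
    (hF : (F : Set (Fin p → ℕ)) ⊆ coneOf S)
    (hext : ∀ x ∈ coneOf S, ∀ y ∈ coneOf S, x + y ∈ τ → x ∈ τ ∧ y ∈ τ)
    {x : Fin p → ℕ} (hx : x ∈ AddSubmonoid.closure (F : Set (Fin p → ℕ))) :
    x ∈ coneOf S ∧ (x ≠ 0 → x ∈ τ → ∃ f ∈ F, f ≠ 0 ∧ f ∈ τ) := by
  induction hx using AddSubmonoid.closure_induction with
  | mem f hf => exact ⟨hF hf, fun h0 hτ' => ⟨f, Finset.mem_coe.mp hf, h0, hτ'⟩⟩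
  | zero => exact ⟨zero_mem_coneOf S, fun h0 _ => absurd rfl h0⟩
  | add a b ha hb iha ihb =>
    refine ⟨add_mem_coneOf iha.1 ihb.1, fun h0 hτ' => ?_⟩
    obtain ⟨haτ, hbτ⟩ := hext a iha.1 b ihb.1 hτ'
    by_cases ha0 : a = 0
    · refine ihb.2 (fun hb0 => h0 ?_) hbτ
      rw [ha0, hb0, add_zero]
    · exact iha.2 ha0 haτ


end S7

open S7 in
/-- Let `S` be an affine semigroup whose cone has extremal rays `τ 1, …, τ t`,
and `P` an ideal of `S`. Then `P ∪ {0}` is an affine semigroup with cone equal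
to the cone of `S` iff there exists `Y ⊆ P \ {0}` meeting every extremal ray. -/
theorem statement7 {p t : ℕ} (S : Set (Fin p → ℕ))
    (τ : Fin t → Set (Fin p → ℕ)) (hS : IsAffine S)
    (hτ : RaysOf (coneOf S) τ) (P : Set (Fin p → ℕ)) (hP : IsIdealOf S P) :
    (IsAffine (P ∪ {0}) ∧ coneOf P = coneOf S) ↔
      ∃ Y : Set (Fin p → ℕ), Y ⊆ P \ {0} ∧ ∀ i, (Y ∩ τ i).Nonempty := by
  classical
  obtain ⟨F₀, hF₀⟩ := hS
  constructor
  · rintro ⟨⟨F, hF⟩, hcone⟩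
    refine ⟨(F : Set (Fin p → ℕ)) \ {0}, ?_, ?_⟩
    · rintro f ⟨hf, hf0⟩
      have hf' : f ∈ P ∪ {0} := by rw [hF]; exact AddSubmonoid.subset_closure hf
      rcases hf' with h | h
      · exact ⟨h, hf0⟩
      · exact absurd h hf0
    · intro i
      obtain ⟨⟨v, hv0, hvC, hτv⟩, hext⟩ := hτ.1 i
      have hvP : v ∈ coneOf P := hcone ▸ hvC
      obtain ⟨n, hn, hnv⟩ := hvP
      have hclP : AddSubmonoid.closure P ≤ AddSubmonoid.closure (F : Set (Fin p → ℕ)) :=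
        AddSubmonoid.closure_le.mpr
          (fun x hx => hF ▸ (Or.inl hx : x ∈ P ∪ {0}))
      have hnvF : n • v ∈ AddSubmonoid.closure (F : Set (Fin p → ℕ)) := hclP hnv
      have hFc : (F : Set (Fin p → ℕ)) ⊆ coneOf S := by
        intro f hf
        have hf' : f ∈ P ∪ {0} := by rw [hF]; exact AddSubmonoid.subset_closure hf
        rcases hf' with h | h
        · exact subset_coneOf S (hP.1 h)
        · rw [h]; exact zero_mem_coneOf S
      have hnv0 : n • v ≠ 0 := fun h => hv0 (pi_nsmul_eq_zero hn h)
      have hnvτ : n • v ∈ τ i := by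
        rw [hτv]
        exact ⟨nsmul_mem_coneOf n hvC, n, 1, one_pos, by rw [one_smul]⟩
      obtain ⟨f, hfF, hf0, hfτ⟩ := (exists_gen_on_ray hFc hext hnvF).2 hnv0 hnvτ
      exact ⟨f, ⟨Finset.mem_coe.mpr hfF, hf0⟩, hfτ⟩
  · rintro ⟨Y, hYP, hY⟩
    have hS_sub : S = ((AddSubmonoid.closure (F₀ : Set (Fin p → ℕ))) : Set (Fin p → ℕ)) := hF₀
    set MS := AddSubmonoid.closure (F₀ : Set (Fin p → ℕ)) with hMS
    have hconeSF : coneOf S = coneOf (F₀ : Set (Fin p → ℕ)) := by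
      rw [hS_sub, coneOf_coe_closure]
    -- the key multiple lemma
    have hmult : ∀ x ∈ coneOf S, x ≠ 0 → ∃ m, 0 < m ∧ m • x ∈ P := by
      intro x hx hx0
      obtain ⟨g, hgF, hg0, hext, M, k, z, hM, hk, hz, heq⟩ :=
        minkowski_aux F₀.card F₀ rfl x (hconeSF ▸ hx) hx0
      rw [← hconeSF] at hext hz
      obtain ⟨i, hi⟩ := hτ.2.2 _ hext
      obtain ⟨y, hyY, hyτ⟩ := hY i
      obtain ⟨hyP, hy0⟩ := hYP hyY
      rw [← hi] at hyτ
      obtain ⟨hyC, a, b, hb, hab⟩ := hyτ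
      have ha : 0 < a := by
        rcases Nat.eq_zero_or_pos a with rfl | h
        · exact absurd (pi_nsmul_eq_zero hb (by rw [hab, zero_smul]))
            (by simpa using hy0)
        · exact h
      have heq2 : (a * M) • x = (k * b) • y + a • z := by
        rw [mul_smul, heq, smul_add, smul_smul,
          show (k * b) • y = (k * a) • g from by rw [mul_smul, hab, smul_smul],
          mul_comm a k]
      have hkb : 1 ≤ k * b := Nat.one_le_iff_ne_zero.mpr (Nat.mul_ne_zero hk.ne' hb.ne')
      set w := (k * b - 1) • y + a • z with hw
      have hyCone : y ∈ coneOf S := subset_coneOf S (hP.1 hyP)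
      have hwC : w ∈ coneOf S :=
        add_mem_coneOf (nsmul_mem_coneOf _ hyCone) (nsmul_mem_coneOf _ hz)
      have heq3 : (a * M) • x = y + w := by
        rw [heq2, hw, ← add_assoc]
        congr 1
        exact nsmul_split_one hkb y
      obtain ⟨L, hL, hLw⟩ := hwC
      have hclSS : AddSubmonoid.closure S = MS := by
        rw [hS_sub, hMS, AddSubmonoid.closure_eq]
      rw [hclSS] at hLw
      have hLwS : L • w ∈ S := by rw [hS_sub]; exact hLw
      refine ⟨L * (a * M), by positivity, ?_⟩
      have heq4 : (L * (a * M)) • x = y + ((L - 1) • y + L • w) := by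
        rw [mul_smul, heq3, smul_add, ← add_assoc]
        congr 1
        exact nsmul_split_one hL y
      rw [heq4]
      refine hP.2 (Set.add_mem_add hyP ?_)
      have h1 : (L - 1) • y ∈ MS := AddSubmonoid.nsmul_mem MS (show y ∈ (MS : Set (Fin p → ℕ)) from hS_sub ▸ hP.1 hyP) _
      have h2 : (L - 1) • y + L • w ∈ MS := AddSubmonoid.add_mem MS h1 hLw
      rw [hS_sub]
      exact h2
    have hconeEq : coneOf P = coneOf S := by
      apply Set.Subset.antisymm (coneOf_mono hP.1)
      intro x hx
      by_cases hx0 : x = 0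
      · rw [hx0]; exact zero_mem_coneOf P
      · obtain ⟨m, hm, hmP⟩ := hmult x hx hx0
        exact ⟨m, hm, AddSubmonoid.subset_closure hmP⟩
    refine ⟨?_, hconeEq⟩
    -- finite generation of P ∪ {0}
    set G := F₀.erase 0 with hG
    have hclG : AddSubmonoid.closure ((G : Finset (Fin p → ℕ)) : Set (Fin p → ℕ)) = MS := by
      apply le_antisymm
      · exact AddSubmonoid.closure_mono (by
          intro f hf
          exact Finset.mem_coe.mpr (Finset.mem_of_mem_erase (Finset.mem_coe.mp hf)))
      · rw [hMS]
        apply AddSubmonoid.closure_le.mpr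
        intro f hf
        by_cases hf0 : f = (0 : Fin p → ℕ)
        · rw [hf0]; exact zero_mem _
        · exact AddSubmonoid.subset_closure
            (Finset.mem_coe.mpr (Finset.mem_erase.mpr ⟨hf0, Finset.mem_coe.mp hf⟩))
    have hSG : ((AddSubmonoid.closure ((G : Finset (Fin p → ℕ)) : Set (Fin p → ℕ))) :
        Set (Fin p → ℕ)) = S := by rw [hclG, ← hS_sub]
    set φ : ({g : Fin p → ℕ // g ∈ G} → ℕ) → (Fin p → ℕ) :=
      fun c => ∑ g : {g : Fin p → ℕ // g ∈ G}, c g • (g : Fin p → ℕ) with hφ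
    have hφadd : ∀ c d, φ (c + d) = φ c + φ d := by
      intro c d
      rw [hφ]
      simp only [Pi.add_apply, add_smul]
      rw [Finset.sum_add_distrib]
    have hφS : ∀ c, φ c ∈ S := by
      intro c
      rw [← hSG, hφ]
      refine AddSubmonoid.sum_mem _ fun g _ => ?_
      exact AddSubmonoid.nsmul_mem _ (AddSubmonoid.subset_closure (Finset.mem_coe.mpr g.2)) _
    have hφsurj : ∀ x ∈ S, ∃ c, φ c = x := by
      intro x hx
      rw [← hSG] at hx
      obtain ⟨c, hc⟩ := exists_coeffs hx
      refine ⟨fun g => c g, ?_⟩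
      rw [hc, hφ]
      exact Finset.sum_coe_sort G (fun g => c g • g)
    set U : Set ({g : Fin p → ℕ // g ∈ G} → ℕ) := {c | φ c ∈ P} with hU
    have hUup : ∀ c ∈ U, ∀ c', c ≤ c' → c' ∈ U := by
      intro c hc c' hcc
      have hsplit : c' = c + (c' - c) := by
        funext g
        have h2 : c g ≤ c' g := hcc g
        simp only [Pi.add_apply, Pi.sub_apply]
        omega
      rw [hU, Set.mem_setOf_eq, hsplit, hφadd]
      exact hP.2 (Set.add_mem_add hc (hφS _))
    set B := {b ∈ U | ∀ v ∈ U, v ≤ b → v = b} with hB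
    have hBfin : B.Finite := finite_minimals U
    have hmg : ∀ g : {g : Fin p → ℕ // g ∈ G}, ∃ m, 0 < m ∧ m • (g : Fin p → ℕ) ∈ P := by
      intro g
      have hg0 : (g : Fin p → ℕ) ≠ 0 := (Finset.mem_erase.mp g.2).1
      have hgS : (g : Fin p → ℕ) ∈ S := by
        rw [← hSG]; exact AddSubmonoid.subset_closure (Finset.mem_coe.mpr g.2)
      exact hmult _ (subset_coneOf S hgS) hg0
    choose m hmpos hmP using hmg
    set box : Set ({g : Fin p → ℕ // g ∈ G} → ℕ) := {c | ∀ g, c g < m g} with hbox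
    have hboxfin : box.Finite := by
      apply Set.Finite.subset (Set.Finite.pi (fun g => Set.finite_Iio (m g)))
      intro c hc
      exact Set.mem_pi.mpr fun g _ => hc g
    set Gens : Set (Fin p → ℕ) :=
      ((fun bc : ({g : Fin p → ℕ // g ∈ G} → ℕ) × ({g : Fin p → ℕ // g ∈ G} → ℕ) =>
          φ bc.1 + φ bc.2) '' (B ×ˢ box)) ∪
        Set.range (fun g : {g : Fin p → ℕ // g ∈ G} => m g • (g : Fin p → ℕ)) with hGens
    have hGfin : Gens.Finite :=
      Set.Finite.union (Set.Finite.image _ (Set.Finite.prod hBfin hboxfin))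
        (Set.finite_range _)
    have hGP : Gens ⊆ P := by
      rintro x (⟨⟨b, c⟩, hbc, rfl⟩ | ⟨g, rfl⟩)
      · exact hP.2 (Set.add_mem_add (Set.mem_prod.mp hbc).1.1 (hφS c))
      · exact hmP g
    refine ⟨hGfin.toFinset, ?_⟩
    apply Set.Subset.antisymm
    · rintro x (hx | hx)
      · obtain ⟨c, hc⟩ := hφsurj x (hP.1 hx)
        have hcU : c ∈ U := by rw [hU, Set.mem_setOf_eq, hc]; exact hx
        obtain ⟨b, hbU, hbc, hbmin⟩ := exists_minimal_le U c hcU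
        have hbB : b ∈ B := ⟨hbU, hbmin⟩
        have hkey : ∀ n (d : {g : Fin p → ℕ // g ∈ G} → ℕ), (∑ g, d g) = n →
            φ b + φ d ∈ AddSubmonoid.closure
              ((hGfin.toFinset : Finset (Fin p → ℕ)) : Set (Fin p → ℕ)) := by
          intro n
          induction n using Nat.strong_induction_on with
          | _ n ihn =>
            intro d hd
            by_cases hcase : ∀ g, d g < m g
            · apply AddSubmonoid.subset_closure
              rw [Set.Finite.coe_toFinset]
              exact Or.inl ⟨(b, d), Set.mem_prod.mpr ⟨hbB, hcase⟩, rfl⟩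
            · push_neg at hcase
              obtain ⟨g, hg⟩ := hcase
              set ind : {g : Fin p → ℕ // g ∈ G} → ℕ :=
                fun h => if h = g then m g else 0 with hind
              have hdsplit : d = (d - ind) + ind := by
                funext h
                have hindh : ind h ≤ d h := by
                  rw [hind]
                  by_cases heq : h = g
                  · subst heq; simpa using hg
                  · simp [heq]
                simp only [Pi.add_apply, Pi.sub_apply]
                omega
              have hφind : φ ind = m g • (g : Fin p → ℕ) := by
                have hterm : ∀ h : {g : Fin p → ℕ // g ∈ G},
                    ind h • (h : Fin p → ℕ) =
                      if h = g then m g • (g : Fin p → ℕ) else 0 := by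
                  intro h
                  rw [hind]
                  by_cases heq : h = g
                  · subst heq; simp
                  · simp [heq]
                rw [hφ]
                calc (∑ h : {g : Fin p → ℕ // g ∈ G}, ind h • (h : Fin p → ℕ))
                    = ∑ h : {g : Fin p → ℕ // g ∈ G},
                        (if h = g then m g • (g : Fin p → ℕ) else 0) :=
                      Finset.sum_congr rfl (fun h _ => hterm h)
                  _ = m g • (g : Fin p → ℕ) := by
                      rw [Finset.sum_ite_eq' Finset.univ g
                        (fun _ => m g • (g : Fin p → ℕ))]
                      simp
              have hindsum : (∑ h, ind h) = m g := by
                rw [hind, Finset.sum_ite_eq' Finset.univ g (fun _ => m g)]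
                simp
              have hdsum : (∑ h, d h) = (∑ h, (d - ind) h) + m g := by
                conv_lhs => rw [hdsplit]
                simp only [Pi.add_apply]
                rw [Finset.sum_add_distrib, hindsum]
              have hsumlt : (∑ h, (d - ind) h) < n := by
                have := hmpos g
                omega
              have hstep : φ b + φ d =
                  m g • (g : Fin p → ℕ) + (φ b + φ (d - ind)) := by
                rw [show φ d = φ (d - ind) + φ ind from by rw [← hφadd, ← hdsplit],
                  hφind]
                abel
              rw [hstep]
              refine AddSubmonoid.add_mem _ (AddSubmonoid.subset_closure ?_)
                (ihn _ hsumlt _ rfl)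
              rw [Set.Finite.coe_toFinset]
              exact Or.inr ⟨g, rfl⟩
        have hxsplit : x = φ b + φ (c - b) := by
          rw [← hφadd, show b + (c - b) = c from by
            funext g
            have h2 : b g ≤ c g := hbc g
            simp only [Pi.add_apply, Pi.sub_apply]
            omega, hc]
        rw [hxsplit]
        exact hkey _ _ rfl
      · have hx0 : x = 0 := hx
        rw [hx0]
        exact AddSubmonoid.zero_mem _
    · intro x hx
      set Tmon : AddSubmonoid (Fin p → ℕ) :=
        { carrier := P ∪ {0}
          zero_mem' := Or.inr rfl
          add_mem' := by
            rintro a b (ha | ha) (hb | hb)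
            · exact Or.inl (hP.2 (Set.add_mem_add ha (hP.1 hb)))
            · have : b = 0 := hb
              rw [this, add_zero]; exact Or.inl ha
            · have : a = 0 := ha
              rw [this, zero_add]; exact Or.inl hb
            · have ha' : a = 0 := ha
              have hb' : b = 0 := hb
              rw [ha', hb', add_zero]; exact Or.inr rfl } with hT
      have hle : AddSubmonoid.closure
          ((hGfin.toFinset : Finset (Fin p → ℕ)) : Set (Fin p → ℕ)) ≤ Tmon := by
        apply AddSubmonoid.closure_le.mpr
        rw [Set.Finite.coe_toFinset]
        exact fun y hy => Or.inl (hGP hy)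
      exact hle hx
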